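/- Let α > 0, ρ > 0, η, κ, β ∈ ℝ, p ≥ 1, and 0 ≤ a < x. Let f, g be two positive functions on [a,x] such that I f^p(x) < ∞ and I g^p(x) < ∞, where I denotes the generalized fractional integral ρI^{α,β}_{a+,η,κ}. If there exist real constants 0 < m ≤ M such that m ≤ f(t)/g(t) ≤ M for all t ∈ [a,x], then (I f^p(x))^(2/p) + (I g^p(x))^(2/p) ≥ c₂ · (I f^p(x))^(1/p) · (I g^p(x))^(1/p), where c₂ = (M+1)(m+1)/M − 2. -/

import Mathlib

open MeasureTheory

/-- The left-sided generalized (Katugampola) fractional integral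
`ρI^{α,β}_{a+,η,κ} f (x)`. -/
noncomputable def katI (α ρ η κ β a x : ℝ) (f : ℝ → ℝ) : ℝ :=
  (ρ ^ (1 - β) * x ^ κ / Real.Gamma α) *
    ∫ t in a..x, t ^ (ρ * (η + 1) - 1) * (x ^ ρ - t ^ ρ) ^ (α - 1) * f t

/-- Finiteness of the generalized fractional integral, expressed as integrability of the
kernel-weighted integrand. -/
def katIntegrable (α ρ η κ β a x : ℝ) (f : ℝ → ℝ) : Prop :=
  IntervalIntegrable
    (fun t => t ^ (ρ * (η + 1) - 1) * (x ^ ρ - t ^ ρ) ^ (α - 1) * f t)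
    volume a x

theorem kat_aux_final (m M u v : ℝ) (hm : 0 < m) (hmM : m ≤ M)
    (hu0 : 0 ≤ u) (hv0 : 0 ≤ v) (h1 : m * v ≤ u) (h2 : u ≤ M * v) :
    ((M + 1) * (m + 1) / M - 2) * (u * v) ≤ u ^ 2 + v ^ 2 := by
  have hM : 0 < M := lt_of_lt_of_le hm hmM
  rw [← mul_le_mul_iff_of_pos_right hM]
  have hcancel : (M + 1) * (m + 1) / M * M = (M + 1) * (m + 1) :=
    div_mul_cancel₀ _ hM.ne'
  have heq : ((M + 1) * (m + 1) / M - 2) * (u * v) * M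
      = ((M + 1) * (m + 1) - 2 * M) * (u * v) := by
    linear_combination (u * v) * hcancel
  rw [heq]
  rcases le_total v (M * u) with h | h
  · nlinarith [mul_nonneg (sub_nonneg.2 h1) (sub_nonneg.2 h),
      mul_nonneg (mul_nonneg (sub_nonneg.2 hmM) hv0) (add_nonneg hu0 hv0)]
  · have h3 : m * u ≤ v := le_trans (by nlinarith) h
    nlinarith [mul_nonneg (sub_nonneg.2 h2) (sub_nonneg.2 h3),
      mul_nonneg (mul_nonneg hu0 (add_nonneg hu0 hv0)) (sub_nonneg.2 hmM)]

/-- Companion inequality via the generalized fractional integral. -/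
theorem reverse_minkowski_companion_katugampola
    (α ρ η κ β p m M a x : ℝ) (hα : 0 < α) (hρ : 0 < ρ) (hp : 1 ≤ p)
    (ha : 0 ≤ a) (hax : a < x)
    (f g : ℝ → ℝ)
    (hf_pos : ∀ t ∈ Set.Icc a x, 0 < f t)
    (hg_pos : ∀ t ∈ Set.Icc a x, 0 < g t)
    (hf_int : katIntegrable α ρ η κ β a x (fun t => f t ^ p))
    (hg_int : katIntegrable α ρ η κ β a x (fun t => g t ^ p))
    (hm : 0 < m) (hmM : m ≤ M)
    (hbound : ∀ t ∈ Set.Icc a x, m ≤ f t / g t ∧ f t / g t ≤ M) :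
    ((M + 1) * (m + 1) / M - 2) *
        ((katI α ρ η κ β a x (fun t => f t ^ p)) ^ (1 / p) *
          (katI α ρ η κ β a x (fun t => g t ^ p)) ^ (1 / p)) ≤
      (katI α ρ η κ β a x (fun t => f t ^ p)) ^ (2 / p) +
        (katI α ρ η κ β a x (fun t => g t ^ p)) ^ (2 / p) := by
  have hx0 : 0 < x := lt_of_le_of_lt ha hax
  have hp0 : 0 < p := lt_of_lt_of_le one_pos hp
  have hM : 0 < M := lt_of_lt_of_le hm hmM
  set c : ℝ := ρ ^ (1 - β) * x ^ κ / Real.Gamma α with hc_def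
  have hc : 0 < c :=
    div_pos (mul_pos (Real.rpow_pos_of_pos hρ _) (Real.rpow_pos_of_pos hx0 _))
      (Real.Gamma_pos_of_pos hα)
  set k : ℝ → ℝ := fun t => t ^ (ρ * (η + 1) - 1) * (x ^ ρ - t ^ ρ) ^ (α - 1) with hk_def
  have hk : ∀ t ∈ Set.Icc a x, 0 ≤ k t := by
    intro t ht
    have ht0 : 0 ≤ t := le_trans ha ht.1
    have htx : t ^ ρ ≤ x ^ ρ := Real.rpow_le_rpow ht0 ht.2 hρ.le
    exact mul_nonneg (Real.rpow_nonneg ht0 _) (Real.rpow_nonneg (by linarith) _)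
  set F := katI α ρ η κ β a x (fun t => f t ^ p) with hF_def
  set G := katI α ρ η κ β a x (fun t => g t ^ p) with hG_def
  have hFc : F = c * ∫ t in a..x, k t * f t ^ p := rfl
  have hGc : G = c * ∫ t in a..x, k t * g t ^ p := rfl
  have hF0 : 0 ≤ F := by
    rw [hFc]
    exact mul_nonneg hc.le (intervalIntegral.integral_nonneg hax.le
      (fun t ht => mul_nonneg (hk t ht) (Real.rpow_nonneg (hf_pos t ht).le _)))
  have hG0 : 0 ≤ G := by
    rw [hGc]
    exact mul_nonneg hc.le (intervalIntegral.integral_nonneg hax.le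
      (fun t ht => mul_nonneg (hk t ht) (Real.rpow_nonneg (hg_pos t ht).le _)))
  -- upper comparison : F ≤ M^p * G
  have hFG : F ≤ M ^ p * G := by
    have hmono : ∫ t in a..x, k t * f t ^ p ≤ ∫ t in a..x, M ^ p * (k t * g t ^ p) := by
      refine intervalIntegral.integral_mono_on hax.le hf_int (hg_int.const_mul _) ?_
      intro t ht
      have hg := hg_pos t ht
      have hfM : f t ≤ M * g t := (div_le_iff₀ hg).mp (hbound t ht).2
      have : f t ^ p ≤ M ^ p * g t ^ p := by
        calc f t ^ p ≤ (M * g t) ^ p :=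
              Real.rpow_le_rpow (hf_pos t ht).le hfM hp0.le
          _ = M ^ p * g t ^ p := Real.mul_rpow hM.le hg.le
      have hkt := hk t ht
      calc k t * f t ^ p ≤ k t * (M ^ p * g t ^ p) :=
            mul_le_mul_of_nonneg_left this hkt
        _ = M ^ p * (k t * g t ^ p) := by ring
    calc F = c * ∫ t in a..x, k t * f t ^ p := hFc
      _ ≤ c * ∫ t in a..x, M ^ p * (k t * g t ^ p) :=
          mul_le_mul_of_nonneg_left hmono hc.le
      _ = M ^ p * G := by
          rw [intervalIntegral.integral_const_mul, hGc]; ring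
  -- lower comparison : m^p * G ≤ F
  have hGF : m ^ p * G ≤ F := by
    have hmono : ∫ t in a..x, m ^ p * (k t * g t ^ p) ≤ ∫ t in a..x, k t * f t ^ p := by
      refine intervalIntegral.integral_mono_on hax.le (hg_int.const_mul _) hf_int ?_
      intro t ht
      have hg := hg_pos t ht
      have hmf : m * g t ≤ f t := (le_div_iff₀ hg).mp (hbound t ht).1
      have : m ^ p * g t ^ p ≤ f t ^ p := by
        calc m ^ p * g t ^ p = (m * g t) ^ p := (Real.mul_rpow hm.le hg.le).symm
          _ ≤ f t ^ p :=
            Real.rpow_le_rpow (mul_nonneg hm.le hg.le) hmf hp0.le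
      have hkt := hk t ht
      calc m ^ p * (k t * g t ^ p) = k t * (m ^ p * g t ^ p) := by ring
        _ ≤ k t * f t ^ p := mul_le_mul_of_nonneg_left this hkt
    calc m ^ p * G = c * ∫ t in a..x, m ^ p * (k t * g t ^ p) := by
          rw [intervalIntegral.integral_const_mul, hGc]; ring
      _ ≤ c * ∫ t in a..x, k t * f t ^ p := mul_le_mul_of_nonneg_left hmono hc.le
      _ = F := hFc.symm
  set u := F ^ (1 / p) with hu_def
  set v := G ^ (1 / p) with hv_def
  have hu0 : 0 ≤ u := Real.rpow_nonneg hF0 _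
  have hv0 : 0 ≤ v := Real.rpow_nonneg hG0 _
  have hpow : ∀ r : ℝ, 0 < r → (r ^ p) ^ (1 / p) = r := by
    intro r hr
    rw [← Real.rpow_mul hr.le, mul_one_div_cancel hp0.ne', Real.rpow_one]
  have huM : u ≤ M * v := by
    calc u ≤ (M ^ p * G) ^ (1 / p) :=
          Real.rpow_le_rpow hF0 hFG (by positivity)
      _ = (M ^ p) ^ (1 / p) * v :=
          Real.mul_rpow (Real.rpow_nonneg hM.le _) hG0
      _ = M * v := by rw [hpow M hM]
  have hmu : m * v ≤ u := by
    calc m * v = (m ^ p) ^ (1 / p) * v := by rw [hpow m hm]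
      _ = (m ^ p * G) ^ (1 / p) :=
          (Real.mul_rpow (Real.rpow_nonneg hm.le _) hG0).symm
      _ ≤ u := Real.rpow_le_rpow (by positivity) hGF (by positivity)
  have hF2 : F ^ (2 / p) = u ^ 2 := by
    rw [hu_def, show (2 : ℝ) / p = 1 / p * 2 by ring, Real.rpow_mul hF0,
      show ((2 : ℝ)) = ((2 : ℕ) : ℝ) by norm_num, Real.rpow_natCast]
  have hG2 : G ^ (2 / p) = v ^ 2 := by
    rw [hv_def, show (2 : ℝ) / p = 1 / p * 2 by ring, Real.rpow_mul hG0,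
      show ((2 : ℝ)) = ((2 : ℕ) : ℝ) by norm_num, Real.rpow_natCast]
  rw [hF2, hG2]
  exact kat_aux_final m M u v hm hmM hu0 hv0 hmu huM
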